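/- Let a, b > 0 be real numbers and let c be any real number with c ≥ a + b. Then there exist g, h ∈ SU(1,1) such that the matrix g·diag(a,−a)·g⁻¹ + h·diag(b,−b)·h⁻¹ has eigenvalues exactly c and −c. -/

import Mathlib

open Matrix Polynomial

noncomputable section

/-- The signature matrix `J = diag(1,…,1,−1,…,−1)` with `p` ones and `q` minus ones. -/
def Jmat (p q : ℕ) : Matrix (Fin (p + q)) (Fin (p + q)) ℂ :=
  Matrix.diagonal fun i => if (i : ℕ) < p then 1 else -1

/-- The group `SU(p,q)` of complex `(p+q)×(p+q)` matrices `g` with `det g = 1` and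
`gᴴ J g = J`. -/
def SUpq (p q : ℕ) : Set (Matrix (Fin (p + q)) (Fin (p + q)) ℂ) :=
  { g | g.det = 1 ∧ g.conjTranspose * Jmat p q * g = Jmat p q }

/-- `x` is the ordered spectrum of `M`: the entries of `x` are non-increasing within the
first `p` coordinates and within the last `q` coordinates, every entry of the first block
is strictly greater than every entry of the second block, and the eigenvalues of `M`
counted with multiplicity are exactly the entries of `x` (its characteristic polynomial is
`∏ i (X - x i)`). -/
def IsOrderedSpectrum (p q : ℕ) (M : Matrix (Fin (p + q)) (Fin (p + q)) ℂ)
    (x : Fin (p + q) → ℝ) : Prop :=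
  (∀ i j : Fin (p + q), i ≤ j → ((j : ℕ) < p ∨ p ≤ (i : ℕ)) → x j ≤ x i) ∧
  (∀ i j : Fin (p + q), (i : ℕ) < p → p ≤ (j : ℕ) → x j < x i) ∧
  M.charpoly = ∏ i, (X - Polynomial.C ((x i : ℂ)))

lemma my_charpoly_fin_two (M : Matrix (Fin 2) (Fin 2) ℂ) :
    M.charpoly = X^2 - C M.trace * X + C M.det := by
  rw [Matrix.charpoly, Matrix.det_fin_two, Matrix.trace_fin_two, Matrix.det_fin_two]
  rw [Matrix.charmatrix_apply_eq, Matrix.charmatrix_apply_eq,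
    Matrix.charmatrix_apply_ne _ _ _ (by decide), Matrix.charmatrix_apply_ne _ _ _ (by decide)]
  simp only [map_add, _root_.map_mul, map_sub, map_neg]
  ring

lemma Jmat11 : Jmat 1 1 = !![(1:ℂ), 0; 0, -1] := by
  ext i j
  fin_cases i <;> fin_cases j <;> simp [Jmat, Matrix.diagonal] <;> rfl

/-- for `a, b > 0` and any `c ≥ a + b` there are `g, h ∈ SU(1,1)` such that
`g·diag(a,−a)·g⁻¹ + h·diag(b,−b)·h⁻¹` has eigenvalues exactly `c` and `−c`. -/
theorem exists_SU11_conjugates_with_spectrum (a b c : ℝ) (ha : 0 < a) (hb : 0 < b)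
    (hc : a + b ≤ c) :
    ∃ g ∈ SUpq 1 1, ∃ h ∈ SUpq 1 1,
      (g * Matrix.diagonal ![(a : ℂ), (-a : ℝ)] * g⁻¹ +
        h * Matrix.diagonal ![(b : ℂ), (-b : ℝ)] * h⁻¹).charpoly =
        (X - Polynomial.C ((c : ℂ))) * (X - Polynomial.C ((-c : ℝ) : ℂ)) := by
  set u : ℝ := (c^2 - a^2 - b^2) / (2*a*b) with hu_def
  have hab : (0:ℝ) < 2*a*b := by positivity
  have hu : 1 ≤ u := by
    rw [hu_def, le_div_iff₀ hab]
    nlinarith [sq_nonneg (a+b)]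
  set p : ℝ := Real.sqrt ((u+1)/2) with hp_def
  set q : ℝ := Real.sqrt ((u-1)/2) with hq_def
  have hp2 : p^2 = (u+1)/2 := Real.sq_sqrt (by linarith)
  have hq2 : q^2 = (u-1)/2 := Real.sq_sqrt (by linarith)
  have hkey : 2*a*b*u = c^2 - a^2 - b^2 := by
    rw [hu_def]; field_simp
  have hsum : p^2 + q^2 = u := by rw [hp2, hq2]; ring
  have hprod : 4*(p^2*q^2) = u^2 - 1 := by rw [hp2, hq2]; ring
  have hpqR : p^2 - q^2 = 1 := by rw [hp2, hq2]; ring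
  clear_value u p q
  have hpq : (p:ℂ)^2 - (q:ℂ)^2 = 1 := by exact_mod_cast hpqR
  have hsumc : (p:ℂ)^2 + (q:ℂ)^2 = ((u:ℝ):ℂ) := by exact_mod_cast hsum
  have hprodc : 4*((p:ℂ)^2*(q:ℂ)^2) = ((u:ℝ):ℂ)^2 - 1 := by exact_mod_cast hprod
  have hkeyc : 2*(a:ℂ)*b*((u:ℝ):ℂ) = (c:ℂ)^2 - a^2 - b^2 := by exact_mod_cast hkey
  set g : Matrix (Fin (1+1)) (Fin (1+1)) ℂ := !![(p:ℂ), q; q, p] with hg_def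
  set g' : Matrix (Fin (1+1)) (Fin (1+1)) ℂ := !![(p:ℂ), -q; -q, p] with hg'_def
  have hdetg : g.det = 1 := by
    rw [hg_def, Matrix.det_fin_two_of]; linear_combination hpq
  have hgg' : g * g' = 1 := by
    rw [hg_def, hg'_def]
    ext i j
    fin_cases i <;> fin_cases j <;>
      simp [Matrix.mul_apply, Fin.sum_univ_succ, Matrix.one_apply] <;>
      first
        | linear_combination hpq
        | linear_combination -hpq
        | linear_combination 2*hpq
        | linear_combination -2*hpq
        | ring
  have hginv : g⁻¹ = g' := Matrix.inv_eq_right_inv hgg'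
  have hgmem : g ∈ SUpq 1 1 := by
    refine ⟨hdetg, ?_⟩
    rw [Jmat11, hg_def]
    ext i j
    fin_cases i <;> fin_cases j <;>
      simp [Matrix.mul_apply, Fin.sum_univ_succ, Matrix.conjTranspose_apply] <;>
      push_cast <;>
      first
        | linear_combination hpq
        | linear_combination -hpq
        | linear_combination 2*hpq
        | linear_combination -2*hpq
        | ring
  have hmem1 : (1 : Matrix (Fin (1+1)) (Fin (1+1)) ℂ) ∈ SUpq 1 1 := by
    constructor
    · simp
    · simp
  refine ⟨g, hgmem, 1, hmem1, ?_⟩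
  have hda : Matrix.diagonal ![(a : ℂ), (-a : ℝ)] = !![(a:ℂ), 0; 0, -a] := by
    ext i j
    fin_cases i <;> fin_cases j <;> simp [Matrix.diagonal]
  have hdb : Matrix.diagonal ![(b : ℂ), (-b : ℝ)] = !![(b:ℂ), 0; 0, -b] := by
    ext i j
    fin_cases i <;> fin_cases j <;> simp [Matrix.diagonal]
  have hM : g * Matrix.diagonal ![(a : ℂ), (-a : ℝ)] * g⁻¹ +
      (1 : Matrix (Fin (1+1)) (Fin (1+1)) ℂ) * Matrix.diagonal ![(b : ℂ), (-b : ℝ)] * (1 : Matrix (Fin (1+1)) (Fin (1+1)) ℂ)⁻¹ =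
      !![(a:ℂ)*(p^2+q^2) + b, -2*a*p*q; 2*a*p*q, -((a:ℂ)*(p^2+q^2) + b)] := by
    rw [hginv, hda, hdb, hg_def, hg'_def, inv_one, one_mul, mul_one]
    ext i j
    fin_cases i <;> fin_cases j <;>
      simp [Matrix.mul_apply, Fin.sum_univ_succ, Matrix.one_apply] <;> ring
  rw [hM, my_charpoly_fin_two]
  have htr : Matrix.trace !![(a:ℂ)*(p^2+q^2) + b, -2*a*p*q; 2*a*p*q, -((a:ℂ)*(p^2+q^2) + b)] = 0 := by
    simp [Matrix.trace_fin_two]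
  have hdet : Matrix.det !![(a:ℂ)*(p^2+q^2) + b, -2*a*p*q; 2*a*p*q, -((a:ℂ)*(p^2+q^2) + b)] = -(c:ℂ)^2 := by
    rw [Matrix.det_fin_two_of]
    linear_combination (a:ℂ)^2*hprodc -
      (a:ℂ)*((a:ℂ)*((u:ℝ):ℂ) + (a:ℂ)*((p:ℂ)^2+(q:ℂ)^2) + 2*(b:ℂ))*hsumc - hkeyc
  rw [htr, hdet]
  push_cast
  simp only [map_neg, map_pow, map_zero]
  ring
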